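/- Let I ⊆ ℝ be an interval, λ = (λ₁, λ₂): I → ℝ² continuously differentiable with λ′(t) ≠ (0,0) for all t, α: I → ℝ³ twice continuously differentiable, β: I → ℝ³ continuously differentiable, such that for every t ∈ I the vectors α′(t) and β(t) are lightlike, Lorentz-orthogonal, and (α′(t), β(t)) ≠ (0, 0). Let G: I → ℂ be given by G(t) = (α₁′(t) + iα₂′(t))/α₃′(t) wherever α′(t) ≠ 0 and G(t) = (β₁(t) + iβ₂(t))/β₃(t) wherever β₃(t) ≠ 0 (these expressions agree where both apply). Then the following are equivalent: (I) for all t ∈ I, λ₁′(t)·α′(t) + λ₂′(t)·β(t) = 0 in ℝ³ and G′(t) ≠ 0; (II) for all t ∈ I, α₃′(t)λ₁′(t) + β₃(t)λ₂′(t) = 0, and β₁(t)β₂′(t) − β₂(t)β₁′(t) ≠ 0 whenever β₃(t) ≠ 0, and α₁′(t)α₂″(t) − α₂′(t)α₁″(t) ≠ 0 whenever α₃′(t) ≠ 0. -/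

import Mathlib

private lemma ofReal_hasDerivWithinAt {f : ℝ → ℝ} {u z : ℝ} {s : Set ℝ}
    (hf : HasDerivWithinAt f u s z) :
    HasDerivWithinAt (fun y : ℝ => (f y : ℂ)) (u : ℂ) s z := by
  simpa only [Complex.ofRealCLM_apply, Complex.ofReal_one, Complex.real_smul, mul_one] using!
    Complex.ofRealCLM.hasDerivAt.scomp_hasDerivWithinAt z hf

private lemma keyG {I : Set ℝ} {t : ℝ} (ht : t ∈ I)
    (hud : UniqueDiffWithinAt ℝ I t)
    {f f' : ℝ → Fin 3 → ℝ} {G G' : ℝ → ℂ}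
    (hf : ∀ s ∈ I, ∀ j, HasDerivWithinAt (fun u => f u j) (f' s j) I s)
    (hnull : ∀ s ∈ I, f s 0 ^ 2 + f s 1 ^ 2 = f s 2 ^ 2)
    (hG : HasDerivWithinAt G (G' t) I t)
    (hGf : ∀ s ∈ I, f s 2 ≠ 0 → G s = ((f s 0 : ℂ) + Complex.I * (f s 1 : ℂ)) / (f s 2 : ℂ))
    (h2 : f t 2 ≠ 0) :
    (G' t ≠ 0 ↔ f t 0 * f' t 1 - f t 1 * f' t 0 ≠ 0) := by
  -- derivative of the null relation
  have hq : f t 0 * f' t 0 + f t 1 * f' t 1 = f t 2 * f' t 2 := by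
    have h1 : HasDerivWithinAt (fun s => f s 0 ^ 2 + f s 1 ^ 2 - f s 2 ^ 2)
        (2 * f t 0 * f' t 0 + 2 * f t 1 * f' t 1 - 2 * f t 2 * f' t 2) I t := by
      have := (((hf t ht 0).mul (hf t ht 0)).add ((hf t ht 1).mul (hf t ht 1))).sub
        ((hf t ht 2).mul (hf t ht 2))
      convert! this using 1
      · funext s; simp; ring
      · ring
    have h0 : HasDerivWithinAt (fun s => f s 0 ^ 2 + f s 1 ^ 2 - f s 2 ^ 2) 0 I t :=
      (hasDerivWithinAt_const t I 0).congr (fun s hs => by rw [hnull s hs]; ring)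
        (by rw [hnull t ht]; ring)
    have e1 := h1.derivWithin hud
    have e0 := h0.derivWithin hud
    rw [e0] at e1
    linarith
  have hc2 : ContinuousWithinAt (fun s => f s 2) I t := (hf t ht 2).continuousWithinAt
  have hev : ∀ᶠ s in nhdsWithin t I, f s 2 ≠ 0 := hc2.eventually_ne h2
  obtain ⟨U, hUp, hUo, htU⟩ := eventually_nhds_iff.mp (eventually_nhdsWithin_iff.mp hev)
  set N : ℂ := ((f' t 0 : ℂ) + Complex.I * (f' t 1 : ℂ)) * (f t 2 : ℂ) -
      ((f t 0 : ℂ) + Complex.I * (f t 1 : ℂ)) * (f' t 2 : ℂ) with hN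
  have h2c : (f t 2 : ℂ) ≠ 0 := Complex.ofReal_ne_zero.mpr h2
  have hd : HasDerivWithinAt (fun s => ((f s 0 : ℂ) + Complex.I * (f s 1 : ℂ)) / (f s 2 : ℂ))
      (N / (f t 2 : ℂ) ^ 2) (I ∩ U) t := by
    have d0 := (ofReal_hasDerivWithinAt (hf t ht 0)).add
      ((ofReal_hasDerivWithinAt (hf t ht 1)).const_mul Complex.I)
    exact ((d0.div (ofReal_hasDerivWithinAt (hf t ht 2)) h2c)).mono Set.inter_subset_left
  have hGd : HasDerivWithinAt G (N / (f t 2 : ℂ) ^ 2) (I ∩ U) t :=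
    hd.congr (fun s hs => hGf s hs.1 (hUp s hs.2 hs.1)) (hGf t ht h2)
  have hset : (I ∩ U : Set ℝ) =ᶠ[nhds t] I := by
    rw [Filter.eventuallyEq_set]
    filter_upwards [hUo.mem_nhds htU] with s hs
    simp [hs]
  have hGI : HasDerivWithinAt G (N / (f t 2 : ℂ) ^ 2) I t := hGd.congr_set hset
  have hval : G' t = N / (f t 2 : ℂ) ^ 2 := by
    rw [← hG.derivWithin hud, hGI.derivWithin hud]
  have hre : N.re = f' t 0 * f t 2 - f t 0 * f' t 2 := by simp [hN]
  have him : N.im = f' t 1 * f t 2 - f t 1 * f' t 2 := by simp [hN]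
  have hkey : N.re ^ 2 + N.im ^ 2 = (f t 0 * f' t 1 - f t 1 * f' t 0) ^ 2 := by
    rw [hre, him]
    linear_combination (f' t 2 ^ 2 - f' t 0 ^ 2 - f' t 1 ^ 2) * hnull t ht +
      (f t 0 * f' t 0 + f t 1 * f' t 1 - f t 2 * f' t 2) * hq
  rw [hval]
  have hNiff : N ≠ 0 ↔ f t 0 * f' t 1 - f t 1 * f' t 0 ≠ 0 := by
    constructor
    · intro hNne hD
      apply hNne
      have hs : N.re ^ 2 + N.im ^ 2 = 0 := by rw [hkey, hD]; ring
      have h1 : N.re = 0 := by nlinarith [sq_nonneg N.re, sq_nonneg N.im]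
      have h2' : N.im = 0 := by nlinarith [sq_nonneg N.re, sq_nonneg N.im]
      exact Complex.ext (by simpa using h1) (by simpa using h2')
    · intro hD hNz
      apply hD
      rw [hNz] at hkey
      have : (f t 0 * f' t 1 - f t 1 * f' t 0) ^ 2 = 0 := by
        rw [← hkey]; simp
      exact pow_eq_zero_iff (by norm_num) |>.mp this
  rw [div_ne_zero_iff]
  constructor
  · intro h; exact hNiff.mp h.1
  · intro h; exact ⟨hNiff.mpr h, pow_ne_zero _ h2c⟩



/-- Proposition 3.1: the trace of `λ` consists only of shrinking singular points,
i.e. `X∘λ` is constant and `G' ≠ 0` along `λ` (condition (I)), if and only if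
`α₃'λ₁' + β₃λ₂' = 0` together with the nonvanishing of the determinants
`D(β₁₂, β₁₂')` (where `β₃ ≠ 0`) and `D(α₁₂', α₁₂'')` (where `α₃' ≠ 0`) (condition (II)). -/
theorem stmt_6 (I : Set ℝ) (hI : I.OrdConnected) (hInt : I.Nontrivial)
    (lam1 lam2 lam1' lam2' : ℝ → ℝ)
    (α α' α'' β β' : ℝ → Fin 3 → ℝ) (G G' : ℝ → ℂ)
    (hlam1 : ∀ t ∈ I, HasDerivWithinAt lam1 (lam1' t) I t)
    (hlam2 : ∀ t ∈ I, HasDerivWithinAt lam2 (lam2' t) I t)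
    (hlam1c : ContinuousOn lam1' I) (hlam2c : ContinuousOn lam2' I)
    (hlamne : ∀ t ∈ I, (lam1' t, lam2' t) ≠ (0, 0))
    (hα : ∀ t ∈ I, ∀ j, HasDerivWithinAt (fun s => α s j) (α' t j) I t)
    (hα' : ∀ t ∈ I, ∀ j, HasDerivWithinAt (fun s => α' s j) (α'' t j) I t)
    (hα''c : ∀ j, ContinuousOn (fun s => α'' s j) I)
    (hβ : ∀ t ∈ I, ∀ j, HasDerivWithinAt (fun s => β s j) (β' t j) I t)
    (hβ'c : ∀ j, ContinuousOn (fun s => β' s j) I)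
    (hnullα : ∀ t ∈ I, α' t 0 ^ 2 + α' t 1 ^ 2 = α' t 2 ^ 2)
    (hnullβ : ∀ t ∈ I, β t 0 ^ 2 + β t 1 ^ 2 = β t 2 ^ 2)
    (horth : ∀ t ∈ I, α' t 0 * β t 0 + α' t 1 * β t 1 = α' t 2 * β t 2)
    (hne : ∀ t ∈ I, ¬ (α' t = 0 ∧ β t = 0))
    (hG : ∀ t ∈ I, HasDerivWithinAt G (G' t) I t)
    (hGα : ∀ t ∈ I, α' t ≠ 0 →
      G t = ((α' t 0 : ℂ) + Complex.I * (α' t 1 : ℂ)) / (α' t 2 : ℂ))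
    (hGβ : ∀ t ∈ I, β t 2 ≠ 0 →
      G t = ((β t 0 : ℂ) + Complex.I * (β t 1 : ℂ)) / (β t 2 : ℂ)) :
    (∀ t ∈ I, (∀ j, lam1' t * α' t j + lam2' t * β t j = 0) ∧ G' t ≠ 0) ↔
    (∀ t ∈ I, α' t 2 * lam1' t + β t 2 * lam2' t = 0 ∧
      (β t 2 ≠ 0 → β t 0 * β' t 1 - β t 1 * β' t 0 ≠ 0) ∧
      (α' t 2 ≠ 0 → α' t 0 * α'' t 1 - α' t 1 * α'' t 0 ≠ 0)) := by
  -- unique differentiability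
  have hud : ∀ t ∈ I, UniqueDiffWithinAt ℝ I t := by
    obtain ⟨a, ha, b, hb, hab⟩ := hInt
    have hconv : Convex ℝ I := convex_iff_ordConnected.mpr hI
    have hint : (interior I).Nonempty := by
      rcases hab.lt_or_gt with h | h
      · refine ⟨(a + b) / 2, ?_⟩
        apply interior_maximal (Set.Ioo_subset_Icc_self.trans (hI.out ha hb)) isOpen_Ioo
        constructor <;> linarith
      · refine ⟨(a + b) / 2, ?_⟩
        apply interior_maximal (Set.Ioo_subset_Icc_self.trans (hI.out hb ha)) isOpen_Ioo
        constructor <;> linarith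
    intro t ht
    exact uniqueDiffWithinAt_convex hconv hint (subset_closure ht)
  have hαzero : ∀ t ∈ I, α' t 2 = 0 → α' t = 0 := by
    intro t ht h
    have hn := hnullα t ht
    have h0 : α' t 0 = 0 := by nlinarith [sq_nonneg (α' t 0), sq_nonneg (α' t 1)]
    have h1 : α' t 1 = 0 := by nlinarith [sq_nonneg (α' t 0), sq_nonneg (α' t 1)]
    funext j; fin_cases j <;> simp [h0, h1, h]
  have hβzero : ∀ t ∈ I, β t 2 = 0 → β t = 0 := by
    intro t ht h
    have hn := hnullβ t ht
    have h0 : β t 0 = 0 := by nlinarith [sq_nonneg (β t 0), sq_nonneg (β t 1)]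
    have h1 : β t 1 = 0 := by nlinarith [sq_nonneg (β t 0), sq_nonneg (β t 1)]
    funext j; fin_cases j <;> simp [h0, h1, h]
  have hprop : ∀ t ∈ I, ∀ j, β t 2 * α' t j = α' t 2 * β t j := by
    intro t ht j
    have key : (β t 2 * α' t 0 - α' t 2 * β t 0) ^ 2 +
        (β t 2 * α' t 1 - α' t 2 * β t 1) ^ 2 = 0 := by
      linear_combination (β t 2) ^ 2 * hnullα t ht + (α' t 2) ^ 2 * hnullβ t ht -
        2 * (α' t 2) * (β t 2) * horth t ht
    have e0 : β t 2 * α' t 0 = α' t 2 * β t 0 := by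
      nlinarith [sq_nonneg (β t 2 * α' t 0 - α' t 2 * β t 0),
        sq_nonneg (β t 2 * α' t 1 - α' t 2 * β t 1)]
    have e1 : β t 2 * α' t 1 = α' t 2 * β t 1 := by
      nlinarith [sq_nonneg (β t 2 * α' t 0 - α' t 2 * β t 0),
        sq_nonneg (β t 2 * α' t 1 - α' t 2 * β t 1)]
    fin_cases j
    · exact e0
    · exact e1
    · exact mul_comm _ _
  have hvec : ∀ t ∈ I, α' t 2 * lam1' t + β t 2 * lam2' t = 0 →
      ∀ j, lam1' t * α' t j + lam2' t * β t j = 0 := by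
    intro t ht h3 j
    by_cases ha2 : α' t 2 = 0
    · have hα0 := hαzero t ht ha2
      have hb2 : β t 2 ≠ 0 := fun hb2 => hne t ht ⟨hα0, hβzero t ht hb2⟩
      have hl2 : lam2' t = 0 := by
        have hmul : β t 2 * lam2' t = 0 := by rw [ha2, zero_mul, zero_add] at h3; exact h3
        exact (mul_eq_zero.mp hmul).resolve_left hb2
      rw [hα0, hl2]; simp
    · have hp := hprop t ht j
      have hmul : α' t 2 * (lam1' t * α' t j + lam2' t * β t j) = 0 := by
        linear_combination α' t j * h3 - lam2' t * hp
      exact (mul_eq_zero.mp hmul).resolve_left ha2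
  have hGα2 : ∀ s ∈ I, α' s 2 ≠ 0 →
      G s = ((α' s 0 : ℂ) + Complex.I * (α' s 1 : ℂ)) / (α' s 2 : ℂ) := by
    intro s hs h2
    exact hGα s hs (fun h0 => h2 (by rw [h0]; rfl))
  constructor
  · intro h t ht
    obtain ⟨hv, hg⟩ := h t ht
    refine ⟨by have := hv 2; linarith, ?_, ?_⟩
    · intro hb2
      exact (keyG ht (hud t ht) hβ hnullβ (hG t ht) hGβ hb2).mp hg
    · intro ha2
      exact (keyG ht (hud t ht) hα' hnullα (hG t ht) hGα2 ha2).mp hg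
  · intro h t ht
    obtain ⟨h3, hbD, haD⟩ := h t ht
    refine ⟨hvec t ht h3, ?_⟩
    by_cases hb2 : β t 2 = 0
    · have ha2 : α' t 2 ≠ 0 := fun h0 => hne t ht ⟨hαzero t ht h0, hβzero t ht hb2⟩
      exact (keyG ht (hud t ht) hα' hnullα (hG t ht) hGα2 ha2).mpr (haD ha2)
    · exact (keyG ht (hud t ht) hβ hnullβ (hG t ht) hGβ hb2).mpr (hbD hb2)
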